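/- Let t be a rooted tree with pairwise distinct leaf labels in which every internal vertex has at least two children, and let S be a set of labels. Then the number of vertices of t that are complete with respect to S is at most 2·|S ∩ L(r)|, where r is the root of t; equivalently, the number of vertices v with L(v) ⊆ S is at most twice the number of leaves of t whose label lies in S. (This is the aggregate form of the amortized O(1)-per-leaf counter-update bound.) -/

import Mathlib

inductive RTree (α : Type*) where
  | leaf (a : α)
  | node (children : List (RTree α))

namespace RTree

variable {α : Type*} [DecidableEq α]

/-- The list of leaf labels of a tree. -/
def leafList : RTree α → List α
  | leaf a => [a]
  | node cs => (cs.attach.map fun ⟨w, _⟩ => leafList w).flatten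
decreasing_by have := List.sizeOf_lt_of_mem ‹_›; simp only [node.sizeOf_spec]; omega

/-- `L v` is the finite set of labels of leaves in the subtree rooted at `v`. -/
def L (v : RTree α) : Finset α := (leafList v).toFinset

/-- The counter function. -/
def counter (S : Finset α) : RTree α → ℕ
  | leaf a => if a ∈ S then 1 else 0
  | node cs =>
      (cs.attach.map fun ⟨w, _⟩ =>
        if counter S w = (L w).card then counter S w else 0).sum
decreasing_by have := List.sizeOf_lt_of_mem ‹_›; simp only [node.sizeOf_spec]; omega

/-- `IsVertex v t` means that `v` is a vertex (subtree) of `t`. -/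
inductive IsVertex : RTree α → RTree α → Prop
  | refl (t : RTree α) : IsVertex t t
  | child {v w : RTree α} {cs : List (RTree α)} : w ∈ cs → IsVertex v w → IsVertex v (node cs)

/-- The list of all vertices (subtrees) of a tree. -/
def vertexList : RTree α → List (RTree α)
  | leaf a => [leaf a]
  | node cs => node cs :: (cs.attach.map fun ⟨w, _⟩ => vertexList w).flatten
decreasing_by have := List.sizeOf_lt_of_mem ‹_›; simp only [node.sizeOf_spec]; omega

lemma leafList_node (cs : List (RTree α)) :
    (node cs).leafList = (cs.map leafList).flatten := by
  rw [leafList]; congr 1; exact List.attach_map_val (l := cs) (f := leafList)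

lemma counter_node (S : Finset α) (cs : List (RTree α)) :
    counter S (node cs) =
      (cs.map fun w => if counter S w = (L w).card then counter S w else 0).sum := by
  rw [counter]; congr 1
  exact List.attach_map_val (l := cs) (f := fun w => if counter S w = (L w).card then counter S w else 0)

lemma vertexList_node (cs : List (RTree α)) :
    (node cs).vertexList = node cs :: (cs.map vertexList).flatten := by
  rw [vertexList]; congr 2; exact List.attach_map_val (l := cs) (f := vertexList)

private lemma sum_map_add {β : Type*} (l : List β) (f g : β → ℕ) :
    (l.map fun x => f x + g x).sum = (l.map f).sum + (l.map g).sum := by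
  induction l with
  | nil => simp
  | cons a l ih => simp [ih]; omega

private lemma sum_map_two_mul {β : Type*} (l : List β) (f : β → ℕ) :
    (l.map fun x => 2 * f x).sum = 2 * (l.map f).sum := by
  induction l with
  | nil => simp
  | cons a l ih => simp [ih]; omega

private lemma sum_eq_of_le {β : Type*} (f g : β → ℕ) :
    ∀ l : List β, (∀ x ∈ l, f x ≤ g x) →
      (l.map f).sum = (l.map g).sum → ∀ x ∈ l, f x = g x
  | [], _, _, x, hx => by simp at hx
  | a :: l, hle, hsum, x, hx => by
    simp only [List.map_cons, List.sum_cons] at hsum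
    have h1 : f a ≤ g a := hle a (by simp)
    have h2 : (l.map f).sum ≤ (l.map g).sum :=
      List.sum_le_sum fun x hx => hle x (by simp [hx])
    have ha : f a = g a := by omega
    have hs : (l.map f).sum = (l.map g).sum := by omega
    rcases List.mem_cons.mp hx with rfl | hx
    · exact ha
    · exact sum_eq_of_le f g l (fun x hx => hle x (by simp [hx])) hs x hx

lemma counter_le (S : Finset α) (t : RTree α) : counter S t ≤ t.leafList.length := by
  cases t with
  | leaf a => rw [counter, leafList]; split <;> simp
  | node cs =>
    rw [counter_node, leafList_node, List.length_flatten, List.map_map]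
    apply List.sum_le_sum
    intro w _
    simp only [Function.comp_apply]
    split
    · next h => rw [h]; exact List.toFinset_card_le _
    · exact Nat.zero_le _

lemma child_complete (S : Finset α) {cs : List (RTree α)}
    (hnd : (node cs).leafList.Nodup)
    (hc : counter S (node cs) = (L (node cs)).card) :
    ∀ w ∈ cs, counter S w = (L w).card := by
  rw [leafList_node] at hnd
  have hcard : (L (node cs)).card = (cs.map fun w => (leafList w).length).sum := by
    rw [L, List.toFinset_card_of_nodup (leafList_node cs ▸ hnd), leafList_node,
      List.length_flatten, List.map_map]
    rfl
  rw [counter_node, hcard] at hc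
  have hle : ∀ w ∈ cs,
      (if counter S w = (L w).card then counter S w else 0) ≤ (leafList w).length := by
    intro w _
    split
    · next h => rw [h]; exact List.toFinset_card_le _
    · exact Nat.zero_le _
  have := sum_eq_of_le _ _ cs hle hc
  intro w hw
  by_cases h : counter S w = (L w).card
  · exact h
  · exfalso
    have h0 := this w hw
    rw [if_neg h] at h0
    have h1 : (L w).card ≤ (leafList w).length := List.toFinset_card_le _
    have h2 := counter_le S w
    omega

private lemma aux (S : Finset α) :
    ∀ t : RTree α, t.leafList.Nodup →
    (∀ cs : List (RTree α), IsVertex (node cs) t → 2 ≤ cs.length) →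
    ((vertexList t).filter fun v => decide (counter S v = (L v).card)).length
      + (if counter S t = (L t).card then 1 else 0)
      ≤ 2 * (t.leafList.filter fun a => decide (a ∈ S)).length
  | leaf a, _, _ => by
    by_cases h : a ∈ S <;>
      simp [vertexList, counter, leafList, L, List.filter, h]
  | node cs, hnd, hbr => by
    have hndw : ∀ w ∈ cs, (leafList w).Nodup := by
      intro w hw
      have hs : (leafList w).Sublist ((cs.map leafList).flatten) :=
        List.sublist_flatten_of_mem (List.mem_map_of_mem (f := leafList) hw)
      exact (leafList_node cs ▸ hnd).sublist hs
    have hbrw : ∀ w ∈ cs, ∀ ds : List (RTree α), IsVertex (node ds) w → 2 ≤ ds.length :=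
      fun w hw ds h => hbr ds (IsVertex.child hw h)
    have IH : ∀ w ∈ cs,
        ((vertexList w).filter fun v => decide (counter S v = (L v).card)).length
          + (if counter S w = (L w).card then 1 else 0)
          ≤ 2 * ((leafList w).filter fun a => decide (a ∈ S)).length := by
      intro w hw
      exact aux S w (hndw w hw) (hbrw w hw)
    -- abbreviations
    set p : RTree α → Bool := fun v => decide (counter S v = (L v).card) with hp
    have hcount : ((vertexList (node cs)).filter p).length =
        (if counter S (node cs) = (L (node cs)).card then 1 else 0)
          + (cs.map fun w => ((vertexList w).filter p).length).sum := by
      rw [vertexList_node, List.filter_cons]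
      have hfl : (((cs.map vertexList).flatten).filter p).length =
          (cs.map fun w => ((vertexList w).filter p).length).sum := by
        rw [List.filter_flatten, List.length_flatten, List.map_map, List.map_map]
        rfl
      by_cases h : counter S (node cs) = (L (node cs)).card
      · simp [hp, h, hfl, Function.comp_def]; omega
      · simp [hp, h, hfl, Function.comp_def]
    have hrhs : (((node cs).leafList).filter fun a => decide (a ∈ S)).length =
        (cs.map fun w => ((leafList w).filter fun a => decide (a ∈ S)).length).sum := by
      rw [leafList_node, List.filter_flatten, List.length_flatten, List.map_map,
        List.map_map]
      rfl
    rw [hcount, hrhs]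
    by_cases hroot : counter S (node cs) = (L (node cs)).card
    · -- every child is complete
      have hcc := child_complete S hnd hroot
      have key : (cs.map fun w => ((vertexList w).filter p).length + 1).sum ≤
          (cs.map fun w => 2 * ((leafList w).filter fun a => decide (a ∈ S)).length).sum := by
        apply List.sum_le_sum
        intro w hw
        have := IH w hw
        rw [if_pos (hcc w hw)] at this
        exact this
      rw [sum_map_add] at key
      simp only [List.map_const', List.sum_replicate, smul_eq_mul, mul_one] at key
      have hlen : 2 ≤ cs.length := hbr cs (IsVertex.refl _)
      rw [if_pos hroot, sum_map_two_mul] at *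
      omega
    · have key : (cs.map fun w => ((vertexList w).filter p).length).sum ≤
          (cs.map fun w => 2 * ((leafList w).filter fun a => decide (a ∈ S)).length).sum := by
        apply List.sum_le_sum
        intro w hw
        have := IH w hw
        omega
      rw [if_neg hroot, sum_map_two_mul] at *
      omega
decreasing_by have := List.sizeOf_lt_of_mem ‹_›; simp only [node.sizeOf_spec]; omega

/-- in a tree whose internal vertices all have at least two children, the number
of vertices complete with respect to `S` is at most `2·|S ∩ L(r)|`, where `r` is the root. -/
theorem complete_count_le (t : RTree α) (hnd : t.leafList.Nodup)
    (hbr : ∀ cs : List (RTree α), IsVertex (node cs) t → 2 ≤ cs.length)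
    (S : Finset α) :
    ((vertexList t).filter fun v => decide (counter S v = (L v).card)).length ≤
      2 * (S ∩ L t).card := by
  have h := aux S t hnd hbr
  have hcard : (S ∩ L t).card = (t.leafList.filter fun a => decide (a ∈ S)).length := by
    have hfs : (t.leafList.filter fun a => decide (a ∈ S)).toFinset = S ∩ L t := by
      ext x
      simp [L, and_comm]
    rw [← hfs, List.toFinset_card_of_nodup (hnd.filter _)]
  omega

end RTree
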